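/- Let V be a linear subspace of ℝ^n that is spanned by a set of integer vectors (vectors in ℤ^n). If the orthogonal complement V^⊥ contains a non-zero vector all of whose coordinates are non-negative, then V^⊥ contains a non-zero integer vector (an element of ℤ^n) all of whose coordinates are non-negative. -/

import Mathlib

open Set

noncomputable section

namespace S18
variable {n : ℕ}

/-- coercion map ℚ^n → ℝ^n (as EuclideanSpace). -/
def c {n : ℕ} (v : Fin n → ℚ) : EuclideanSpace ℝ (Fin n) := WithLp.toLp 2 (fun i => (v i : ℝ))

lemma c_add (a b : Fin n → ℚ) : c (a + b) = c a + c b := by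
  ext i; simp [c]

lemma c_smul (q : ℚ) (a : Fin n → ℚ) : c (q • a) = (q : ℝ) • c a := by
  ext i; simp [c]

lemma c_zero : c (0 : Fin n → ℚ) = 0 := by ext i; simp [c]

/-- Lemma C0 -/
lemma c_mem_span {s : Set (Fin n → ℚ)} {u : Fin n → ℚ} (hu : u ∈ Submodule.span ℚ s) :
    c u ∈ Submodule.span ℝ (c '' s) := by
  induction hu using Submodule.span_induction with
  | mem x hx => exact Submodule.subset_span ⟨x, hx, rfl⟩
  | zero => rw [c_zero]; exact Submodule.zero_mem _
  | add x y _ _ hx hy => rw [c_add]; exact Submodule.add_mem _ hx hy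
  | smul q x _ hx => rw [c_smul]; exact Submodule.smul_mem _ _ hx

lemma c_single (i : Fin n) : c (Pi.single i 1) = (EuclideanSpace.single i 1 : EuclideanSpace ℝ (Fin n)) := by
  ext j; by_cases h : j = i <;> simp [c, Pi.single_apply, EuclideanSpace.single_apply, h, eq_comm] <;> simp [Ne.symm h]

/-- Lemma A : transfer of linear independence -/
lemma linIndep_transfer {ι : Type*} {v : ι → (Fin n → ℚ)} (hv : LinearIndependent ℚ v) :
    LinearIndependent ℝ (fun j => c (v j)) := by
  classical
  have h' := hv.linearIndepOn_id
  let ι' := h'.extend (Set.range v).subset_univ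
  let b : Module.Basis ι' ℚ (Fin n → ℚ) := Module.Basis.extend h'
  letI : Fintype ι' := FiniteDimensional.fintypeBasisIndex b
  have hcard : Fintype.card ι' = n := by
    have := Module.finrank_eq_card_basis b
    simpa [Module.finrank_fintype_fun_eq_card] using this.symm
  have hspan0 : Submodule.span ℚ (h'.extend (Set.range v).subset_univ) = ⊤ := by
    have hb := b.span_eq
    have hr : Set.range b = h'.extend (Set.range v).subset_univ := by
      ext x
      constructor
      · rintro ⟨i, rfl⟩; rw [Module.Basis.extend_apply_self]; exact i.2
      · intro hx; exact ⟨⟨x, hx⟩, Module.Basis.extend_apply_self _ _⟩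
    rwa [hr] at hb
  have hspan : ⊤ ≤ Submodule.span ℝ (Set.range fun x : ι' => c (x : Fin n → ℚ)) := by
    intro x _
    have hx : x ∈ Submodule.span ℝ (Set.range fun i : Fin n => EuclideanSpace.single i (1:ℝ)) := by
      have heq : Set.range (fun i : Fin n => EuclideanSpace.single i (1:ℝ))
          = Set.range (PiLp.basisFun 2 ℝ (Fin n)) := by
        ext y
        constructor
        · rintro ⟨i, rfl⟩; exact ⟨i, by rw [PiLp.basisFun_apply]⟩
        · rintro ⟨i, rfl⟩; exact ⟨i, by rw [PiLp.basisFun_apply]⟩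
      rw [heq, (PiLp.basisFun 2 ℝ (Fin n)).span_eq]; trivial
    refine Submodule.span_le.2 ?_ hx
    rintro _ ⟨i, rfl⟩
    show EuclideanSpace.single i 1 ∈ _
    rw [← c_single]
    have hsingle : (Pi.single i 1 : Fin n → ℚ) ∈ Submodule.span ℚ (h'.extend (Set.range v).subset_univ) := by
      rw [hspan0]; trivial
    have := c_mem_span hsingle
    refine Submodule.span_mono ?_ this
    rintro _ ⟨y, hy, rfl⟩
    exact ⟨⟨y, hy⟩, rfl⟩
  have H := linearIndependent_of_top_le_span_of_card_eq_finrank hspan (by simp [hcard])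
  let f (i : ι) : ι' := ⟨v i, h'.subset_extend _ ⟨i, rfl⟩⟩
  exact H.comp f fun _ _ heq => hv.injective (by simpa only [f, Subtype.mk.injEq] using heq)


/-- the dot-product bilinear form on ℚ^n -/
def B {n : ℕ} : LinearMap.BilinForm ℚ (Fin n → ℚ) :=
  LinearMap.mk₂ ℚ (fun x y => ∑ i, x i * y i)
    (fun a b y => by simp [add_mul, Finset.sum_add_distrib])
    (fun q a y => by simp [Finset.mul_sum, mul_assoc])
    (fun x a b => by simp [mul_add, Finset.sum_add_distrib])
    (fun q x y => by simp only [Pi.smul_apply, smul_eq_mul, Finset.mul_sum]; exact Finset.sum_congr rfl fun i _ => by ring)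

lemma B_apply (x y : Fin n → ℚ) : B x y = ∑ i, x i * y i := rfl

lemma B_nondeg : (B (n := n)).Nondegenerate := by
  refine ⟨fun x hx => ?_, fun x hx => ?_⟩ <;>
  funext i <;>
  have h := hx x <;>
  rw [B_apply] at h <;>
  have := (Finset.sum_eq_zero_iff_of_nonneg (fun j _ => mul_self_nonneg (x j))).1 h i (Finset.mem_univ i) <;>
  exact mul_self_eq_zero.1 this

lemma B_refl : (B (n := n)).IsRefl := by
  intro x y h
  rw [B_apply] at h ⊢
  simpa [mul_comm] using h

lemma inner_c (v w : Fin n → ℚ) : (inner ℝ (c v) (c w) : ℝ) = ((B v w : ℚ) : ℝ) := by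
  rw [B_apply, PiLp.inner_apply]
  push_cast
  simp [c, RCLike.inner_apply, mul_comm]

/-- Lemma B : finrank of real span of image of a rational subspace -/
lemma finrank_span_c (P : Submodule ℚ (Fin n → ℚ)) :
    Module.finrank ℝ (Submodule.span ℝ (c '' (P : Set (Fin n → ℚ))))
      = Module.finrank ℚ P := by
  classical
  set k := Module.finrank ℚ P
  let bb : Module.Basis (Fin k) ℚ P := Module.finBasis ℚ P
  let vv : Fin k → (Fin n → ℚ) := fun j => (bb j : Fin n → ℚ)
  have hvv : LinearIndependent ℚ vv := bb.linearIndependent.map' P.subtype P.ker_subtype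
  have hind : LinearIndependent ℝ (fun j => c (vv j)) := linIndep_transfer hvv
  have hsp : Submodule.span ℝ (c '' (P : Set (Fin n → ℚ)))
      = Submodule.span ℝ (Set.range fun j => c (vv j)) := by
    apply le_antisymm
    · rw [Submodule.span_le]
      rintro _ ⟨p, hp, rfl⟩
      have hpP : p ∈ Submodule.span ℚ (Set.range vv) := by
        have : Submodule.span ℚ (Set.range vv) = P := by
          have h1 : Submodule.map P.subtype (Submodule.span ℚ (Set.range bb)) = P := by
            rw [bb.span_eq, Submodule.map_top, Submodule.range_subtype]
          rw [← h1, Submodule.map_span]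
          congr 1
          ext x
          simp [vv]
        rw [this]; exact hp
      have := c_mem_span hpP
      refine (Submodule.span_mono ?_ this : _)
      rintro _ ⟨_, ⟨j, rfl⟩, rfl⟩
      exact ⟨j, rfl⟩
    · rw [Submodule.span_le]
      rintro _ ⟨j, rfl⟩
      exact Submodule.subset_span ⟨vv j, (bb j).2, rfl⟩
  rw [hsp, finrank_span_eq_card hind, Fintype.card_fin]


lemma span_c_span (s : Set (Fin n → ℚ)) :
    Submodule.span ℝ (c '' s) = Submodule.span ℝ (c '' ((Submodule.span ℚ s : Submodule ℚ (Fin n → ℚ)) : Set (Fin n → ℚ))) := by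
  apply le_antisymm
  · exact Submodule.span_mono (Set.image_mono Submodule.subset_span)
  · rw [Submodule.span_le]
    rintro _ ⟨p, hp, rfl⟩
    exact c_mem_span hp

/-- Lemma D : the real span of the rational solutions equals the real orthogonal complement. -/
lemma span_c_orthogonal (U : Submodule ℚ (Fin n → ℚ)) :
    Submodule.span ℝ (c '' ((B.orthogonal U : Submodule ℚ (Fin n → ℚ)) : Set (Fin n → ℚ)))
      = (Submodule.span ℝ (c '' (U : Set (Fin n → ℚ))))ᗮ := by
  have hle : Submodule.span ℝ (c '' ((B.orthogonal U : Submodule ℚ (Fin n → ℚ)) : Set (Fin n → ℚ)))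
      ≤ (Submodule.span ℝ (c '' (U : Set (Fin n → ℚ))))ᗮ := by
    rw [Submodule.span_le]
    rintro _ ⟨w, hw, rfl⟩
    rw [SetLike.mem_coe, Submodule.mem_orthogonal]
    intro u hu
    induction hu using Submodule.span_induction with
    | mem x hx =>
      obtain ⟨v, hv, rfl⟩ := hx
      rw [inner_c]
      have : B v w = 0 := hw v hv
      rw [this]; norm_num
    | zero => exact inner_zero_left _
    | add x y _ _ hx hy => rw [inner_add_left, hx, hy, add_zero]
    | smul r x _ hx => rw [inner_smul_left, hx, mul_zero]
  apply Submodule.eq_of_le_of_finrank_eq hle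
  have h1 : Module.finrank ℝ (Submodule.span ℝ (c '' ((B.orthogonal U : Submodule ℚ (Fin n → ℚ)) : Set (Fin n → ℚ))))
      = Module.finrank ℚ (B.orthogonal U) := finrank_span_c _
  have h2 : Module.finrank ℚ (B.orthogonal U) = n - Module.finrank ℚ U := by
    rw [LinearMap.BilinForm.finrank_orthogonal B_nondeg U]
    congr 1
    simp [Module.finrank_fintype_fun_eq_card]
  have h3 := Submodule.finrank_add_finrank_orthogonal (Submodule.span ℝ (c '' (U : Set (Fin n → ℚ))))
  have h4 : Module.finrank ℝ (Submodule.span ℝ (c '' (U : Set (Fin n → ℚ)))) = Module.finrank ℚ U := finrank_span_c _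
  have h5 : Module.finrank ℝ (EuclideanSpace ℝ (Fin n)) = n := finrank_euclideanSpace_fin
  have h6 : Module.finrank ℚ U ≤ n := by
    have := Submodule.finrank_le U
    simpa [Module.finrank_fintype_fun_eq_card] using this
  omega

end S18



/-- If a linear subspace `V ⊆ ℝ^n` is spanned by a set of integer vectors
and its orthogonal complement contains a non-zero vector with all coordinates non-negative,
then `V^⊥` contains a non-zero integer vector with all coordinates non-negative. -/
theorem stmt_18 {n : ℕ} (V : Submodule ℝ (EuclideanSpace ℝ (Fin n)))
    (hV : ∃ S : Set (EuclideanSpace ℝ (Fin n)),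
      (∀ x ∈ S, ∀ i, ∃ z : ℤ, x i = z) ∧ V = Submodule.span ℝ S)
    (hpos : ∃ g ∈ Vᗮ, g ≠ 0 ∧ ∀ i, 0 ≤ g i) :
    ∃ g' ∈ Vᗮ, g' ≠ 0 ∧ (∀ i, ∃ z : ℤ, g' i = z) ∧ ∀ i, 0 ≤ g' i := by
  classical
  obtain ⟨S, hSint, hVS⟩ := hV
  obtain ⟨g, hgV, hg0, hgnn⟩ := hpos
  -- rational preimages of S
  set T : Set (Fin n → ℚ) := {v | S18.c v ∈ S} with hT
  have hST : S18.c '' T = S := by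
    apply Set.Subset.antisymm
    · rintro _ ⟨v, hv, rfl⟩; exact hv
    · intro x hx
      choose z hz using hSint x hx
      refine ⟨fun i => (z i : ℚ), ?_, ?_⟩
      · show S18.c _ ∈ S
        have : S18.c (fun i => (z i : ℚ)) = x := by
          ext i; simp [S18.c, ← hz i]
        rwa [this]
      · ext i; simp [S18.c, ← hz i]
  set T2 : Set (Fin n → ℚ) := T ∪ {v | ∃ i, ¬ (0 < g i) ∧ v = Pi.single i 1} with hT2
  set U : Submodule ℚ (Fin n → ℚ) := Submodule.span ℚ T2 with hU
  set Wq : Submodule ℚ (Fin n → ℚ) := S18.B.orthogonal U with hWq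
  -- g belongs to the real orthogonal complement of span (c '' T2)
  have hgW : g ∈ (Submodule.span ℝ (S18.c '' T2))ᗮ := by
    rw [Submodule.mem_orthogonal]
    intro u hu
    induction hu using Submodule.span_induction with
    | mem x hx =>
      obtain ⟨v, hv, rfl⟩ := hx
      rcases hv with hv | ⟨i, hi, rfl⟩
      · have hxV : S18.c v ∈ V := by
          rw [hVS]
          exact Submodule.subset_span (hST ▸ Set.mem_image_of_mem _ hv)
        exact (Submodule.mem_orthogonal V g).1 hgV _ hxV
      · rw [S18.c_single, EuclideanSpace.inner_single_left]
        have : g i = 0 := le_antisymm (not_lt.1 hi) (hgnn i)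
        simp [this]
    | zero => exact inner_zero_left _
    | add x y _ _ hx hy => rw [inner_add_left, hx, hy, add_zero]
    | smul r x _ hx => rw [inner_smul_left, hx, mul_zero]
  have hg_mem : g ∈ Submodule.span ℝ (S18.c '' (Wq : Set (Fin n → ℚ))) := by
    rw [hWq, S18.span_c_orthogonal, hU, ← S18.span_c_span]
    exact hgW
  rw [Submodule.mem_span_set'] at hg_mem
  obtain ⟨m, r, vs, hsum⟩ := hg_mem
  choose w hwWq hcw using fun j => (vs j).2
  -- a coordinate where g is positive
  have hi0 : ∃ i0, 0 < g i0 := by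
    by_contra h
    push_neg at h
    exact hg0 (PiLp.ext fun i => le_antisymm (h i) (hgnn i))
  obtain ⟨i0, hi0⟩ := hi0
  set Iset : Finset (Fin n) := Finset.univ.filter (fun i => 0 < g i) with hIset
  have hne : Iset.Nonempty := ⟨i0, by simp [hIset, hi0]⟩
  set ε : ℝ := Iset.inf' hne (fun i => g i) with hε
  have hε0 : 0 < ε := by
    rw [hε, Finset.lt_inf'_iff]
    intro i hi
    exact (Finset.mem_filter.1 hi).2
  have hεle : ∀ i, 0 < g i → ε ≤ g i := fun i hi =>
    Finset.inf'_le _ (by simp [hIset, hi])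
  set Bd : Fin m → ℝ := fun j => ∑ i, |(w j i : ℝ)| with hBd
  have hBdle : ∀ j i, |(w j i : ℝ)| ≤ Bd j := fun j i =>
    Finset.single_le_sum (f := fun i => |(w j i : ℝ)|) (fun i _ => abs_nonneg _) (Finset.mem_univ i)
  have hBd0 : ∀ j, 0 ≤ Bd j := fun j => Finset.sum_nonneg fun i _ => abs_nonneg _
  set D : ℝ := ∑ j, Bd j with hD
  have hD0 : 0 ≤ D := Finset.sum_nonneg fun j _ => hBd0 j
  set δ : ℝ := ε / (D + 1) with hδ
  have hδ0 : 0 < δ := div_pos hε0 (by linarith)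
  choose q hq using fun j => exists_rat_near (r j) hδ0
  set wq : Fin n → ℚ := ∑ j, q j • w j with hwq
  have hwqWq : wq ∈ Wq := Submodule.sum_mem _ fun j _ => Submodule.smul_mem _ _ (hwWq j)
  -- coordinates of g
  have hgi : ∀ i, g i = ∑ j, r j * (w j i : ℝ) := by
    intro i
    rw [← hsum]
    have : (∑ j, r j • ((vs j : EuclideanSpace ℝ (Fin n)))) i
        = ∑ j, r j * ((vs j : EuclideanSpace ℝ (Fin n)) i) := by
      simp [Finset.sum_apply]
    rw [this]
    refine Finset.sum_congr rfl fun j _ => ?_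
    rw [← hcw j]
    rfl
  have hwqi : ∀ i, (wq i : ℝ) = ∑ j, (q j : ℝ) * (w j i : ℝ) := by
    intro i
    rw [hwq]
    push_cast [Finset.sum_apply, Pi.smul_apply, smul_eq_mul]
    rfl
  -- approximation bound
  have key : ∀ i, |(wq i : ℝ) - g i| < ε := by
    intro i
    rw [hwqi, hgi, ← Finset.sum_sub_distrib]
    calc |∑ j, ((q j : ℝ) * (w j i : ℝ) - r j * (w j i : ℝ))|
        ≤ ∑ j, |(q j : ℝ) - r j| * |(w j i : ℝ)| := by
          refine (Finset.abs_sum_le_sum_abs _ _).trans ?_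
          refine Finset.sum_le_sum fun j _ => ?_
          rw [← sub_mul, abs_mul]
      _ ≤ ∑ j, δ * Bd j := by
          refine Finset.sum_le_sum fun j _ => ?_
          refine mul_le_mul ?_ (hBdle j i) (abs_nonneg _) (le_of_lt hδ0)
          rw [abs_sub_comm]
          exact le_of_lt (hq j)
      _ = δ * D := by rw [hD, Finset.mul_sum]
      _ < δ * (D + 1) := by
          have := mul_lt_mul_of_pos_left (show D < D + 1 by linarith) hδ0
          linarith
      _ = ε := by
          rw [hδ]
          field_simp
  have hposwq : ∀ i, 0 < g i → 0 < (wq i : ℝ) := by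
    intro i hi
    have h1 := (abs_lt.1 (key i)).1
    have h2 := hεle i hi
    linarith
  have hzerowq : ∀ i, ¬ 0 < g i → wq i = 0 := by
    intro i hi
    have hmem : (Pi.single i 1 : Fin n → ℚ) ∈ U :=
      Submodule.subset_span (Or.inr ⟨i, hi, rfl⟩)
    have h := (LinearMap.BilinForm.mem_orthogonal_iff.1 hwqWq) _ hmem
    rw [S18.B_apply] at h
    rw [← h]
    rw [Finset.sum_eq_single i]
    · simp
    · intro b _ hb; simp [Pi.single_apply, hb]
    · intro hb; exact absurd (Finset.mem_univ i) hb
  have hnnwq : ∀ i, 0 ≤ (wq i : ℝ) := by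
    intro i
    by_cases hi : 0 < g i
    · exact le_of_lt (hposwq i hi)
    · rw [hzerowq i hi]; norm_num
  -- c wq is in Vᗮ
  have hcwqV : S18.c wq ∈ Vᗮ := by
    have h1 : S18.c wq ∈ Submodule.span ℝ (S18.c '' (Wq : Set (Fin n → ℚ))) :=
      Submodule.subset_span ⟨wq, hwqWq, rfl⟩
    rw [hWq, S18.span_c_orthogonal] at h1
    have h2 : V ≤ Submodule.span ℝ (S18.c '' (U : Set (Fin n → ℚ))) := by
      rw [hVS, hU, ← S18.span_c_span, ← hST]
      exact Submodule.span_mono (Set.image_mono Set.subset_union_left)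
    exact Submodule.orthogonal_le h2 h1
  -- clear denominators
  set N : ℕ := ∏ i, (wq i).den with hN
  have hN0 : 0 < N := Finset.prod_pos fun i _ => (wq i).pos
  refine ⟨(N : ℝ) • S18.c wq, Submodule.smul_mem _ _ hcwqV, ?_, ?_, ?_⟩
  · intro h
    have := congrArg (fun x => x i0) h
    have hlt : 0 < (N : ℝ) * (wq i0 : ℝ) :=
      mul_pos (by exact_mod_cast hN0) (hposwq i0 hi0)
    rw [show ((N : ℝ) • S18.c wq) i0 = (N : ℝ) * (wq i0 : ℝ) from rfl] at this
    rw [show (0 : EuclideanSpace ℝ (Fin n)) i0 = 0 from rfl] at this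
    linarith
  · intro i
    refine ⟨(wq i).num * ∏ i' ∈ Finset.univ.erase i, ((wq i').den : ℤ), ?_⟩
    show (N : ℝ) * (wq i : ℝ) = _
    have hQ : (N : ℚ) * wq i = ((wq i).num * ∏ i' ∈ Finset.univ.erase i, ((wq i').den : ℤ) : ℤ) := by
      have hsplit : (N : ℚ) = ((wq i).den : ℚ) * ∏ i' ∈ Finset.univ.erase i, ((wq i').den : ℚ) := by
        rw [hN]
        push_cast
        rw [← Finset.mul_prod_erase _ _ (Finset.mem_univ i)]
      rw [hsplit]
      push_cast
      rw [mul_comm ((wq i).den : ℚ) _, mul_assoc, mul_comm ((wq i).den : ℚ) (wq i), Rat.mul_den_eq_num]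
      ring
    calc (N : ℝ) * (wq i : ℝ) = (((N : ℚ) * wq i : ℚ) : ℝ) := by push_cast; ring
      _ = _ := by rw [hQ]; push_cast; ring
  · intro i
    show 0 ≤ (N : ℝ) * (wq i : ℝ)
    exact mul_nonneg (by positivity) (hnnwq i)
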